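/- Variational formula for the n-th root of the determinant: for every positive definite Hermitian n×n complex matrix A, one has (det A)^{1/n} = (1/n) · inf { tr(AB) : B is a positive definite Hermitian n×n complex matrix with det B = 1 }, where tr(AB) is real and positive for such A and B. -/

import Mathlib

open scoped ComplexOrder

open Matrix in
/-- The trace of a Hermitian matrix equals the sum of its eigenvalues. -/
lemma herm_trace_eq_sum_eigenvalues {n : ℕ} {A : Matrix (Fin n) (Fin n) ℂ}
    (hA : A.IsHermitian) : A.trace = ∑ i, (hA.eigenvalues i : ℂ) := by
  conv_lhs => rw [hA.spectral_theorem]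
  rw [Unitary.conjStarAlgAut_apply, Matrix.trace_mul_cycle]
  rw [show (star hA.eigenvectorUnitary.1 : Matrix (Fin n) (Fin n) ℂ) * hA.eigenvectorUnitary.1
      = 1 from hA.eigenvectorUnitary.2.1]
  rw [one_mul, Matrix.trace_diagonal]
  rfl

open Matrix in
/-- Conjugation of a positive definite matrix by an invertible Hermitian matrix. -/
lemma posdef_conj {n : ℕ} {S B : Matrix (Fin n) (Fin n) ℂ}
    (hS : S.IsHermitian) (hSu : IsUnit S) (hB : B.PosDef) : (S * B * S).PosDef := by
  refine Matrix.PosDef.of_dotProduct_mulVec_pos ?_ ?_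
  · have := Matrix.isHermitian_conjTranspose_mul_mul S hB.1
    rwa [hS.eq] at this
  · intro x hx
    have hSx : S *ᵥ x ≠ 0 := by
      have hinj := Matrix.mulVec_injective_iff_isUnit.mpr hSu
      intro h
      exact hx (hinj (h.trans (Matrix.mulVec_zero S).symm))
    have key : star x ⬝ᵥ (S * B * S) *ᵥ x = star (S *ᵥ x) ⬝ᵥ B *ᵥ (S *ᵥ x) := by
      rw [star_mulVec, hS.eq]
      rw [← Matrix.mulVec_mulVec, ← Matrix.mulVec_mulVec]
      rw [dotProduct_mulVec, dotProduct_mulVec]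
    rw [key]
    exact hB.dotProduct_mulVec_pos hSx

open Matrix in
/-- AM-GM for a positive definite matrix: `n * (det M).re ^ (1/n) ≤ (trace M).re`,
together with the reality and positivity of the trace. -/
lemma posdef_amgm {n : ℕ} (hn : 0 < n) {M : Matrix (Fin n) (Fin n) ℂ}
    (hM : M.PosDef) :
    (n : ℝ) * M.det.re ^ ((n : ℝ)⁻¹) ≤ M.trace.re ∧ M.trace.im = 0 ∧ 0 < M.trace.re := by
  have htr : M.trace = ((∑ i, hM.1.eigenvalues i : ℝ) : ℂ) := by
    rw [herm_trace_eq_sum_eigenvalues hM.1]; push_cast; rfl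
  have hdet : M.det = ((∏ i, hM.1.eigenvalues i : ℝ) : ℂ) := by
    rw [hM.1.det_eq_prod_eigenvalues]; push_cast; rfl
  have hpos : ∀ i, 0 < hM.1.eigenvalues i := hM.eigenvalues_pos
  have htr_re : M.trace.re = ∑ i, hM.1.eigenvalues i := by rw [htr]; simp
  have htr_im : M.trace.im = 0 := by rw [htr]; simp
  have hdet_re : M.det.re = ∏ i, hM.1.eigenvalues i := by rw [hdet, Complex.ofReal_re]
  refine ⟨?_, htr_im, ?_⟩
  · -- AM-GM
    have hw : ∑ _i : Fin n, (n : ℝ)⁻¹ = 1 := by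
      simp [Finset.sum_const]
      field_simp
    have amgm := Real.geom_mean_le_arith_mean_weighted Finset.univ
      (fun _ : Fin n => (n : ℝ)⁻¹) (fun i => hM.1.eigenvalues i)
      (fun i _ => by positivity) hw (fun i _ => (hpos i).le)
    have hprod : (∏ i, hM.1.eigenvalues i ^ ((n : ℝ)⁻¹))
        = (∏ i, hM.1.eigenvalues i) ^ ((n : ℝ)⁻¹) :=
      Real.finset_prod_rpow Finset.univ _ (fun i _ => (hpos i).le) _
    rw [hprod] at amgm
    rw [hdet_re, htr_re]
    calc (n : ℝ) * (∏ i, hM.1.eigenvalues i) ^ ((n : ℝ)⁻¹)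
        ≤ (n : ℝ) * ∑ i : Fin n, (n : ℝ)⁻¹ * hM.1.eigenvalues i := by
          apply mul_le_mul_of_nonneg_left amgm (by positivity)
      _ = ∑ i, hM.1.eigenvalues i := by
          rw [← Finset.mul_sum, ← mul_assoc,
            mul_inv_cancel₀ (by exact_mod_cast hn.ne' : (n : ℝ) ≠ 0), one_mul]
  · rw [htr_re]
    exact Finset.sum_pos (fun i _ => hpos i) ⟨⟨0, hn⟩, Finset.mem_univ _⟩

theorem det_nth_root_eq_inf_trace
    (n : ℕ) (hn : 0 < n)
    (A : Matrix (Fin n) (Fin n) ℂ) (hA : A.PosDef) :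
    A.det.re ^ ((n : ℝ)⁻¹) =
      (1 / (n : ℝ)) * sInf {x : ℝ | ∃ B : Matrix (Fin n) (Fin n) ℂ,
        B.PosDef ∧ B.det = 1 ∧ x = ((A * B).trace).re} ∧
    ∀ B : Matrix (Fin n) (Fin n) ℂ, B.PosDef → B.det = 1 →
      ((A * B).trace).im = 0 ∧ 0 < ((A * B).trace).re := by
  have hdetA : 0 < A.det := hA.det_pos
  have hdetA_re : 0 < A.det.re := (Complex.lt_def.mp hdetA).1
  have hdetA_im : A.det.im = 0 := ((Complex.lt_def.mp hdetA).2).symm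
  have hdetA_eq : A.det = (A.det.re : ℂ) := Complex.ext rfl (by simp [hdetA_im])
  set c : ℝ := A.det.re ^ ((n : ℝ)⁻¹) with hc_def
  have hc : 0 < c := Real.rpow_pos_of_pos hdetA_re _
  -- the square root of A
  set S := (open MatrixOrder in CFC.sqrt A) with hS_def
  have hSps := (open MatrixOrder in Matrix.LE.le.posSemidef (CFC.sqrt_nonneg A))
  have hSherm : S.IsHermitian := hSps.1
  have hSS : S * S = A := (open MatrixOrder in CFC.sqrt_mul_sqrt_self A hA.posSemidef.nonneg)
  have hSdet : S.det * S.det = A.det := by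
    rw [← Matrix.det_mul, hSS]
  have hSu : IsUnit S := by
    have hne : S.det ≠ 0 := fun h => hdetA.ne' (by rw [← hSdet, h, mul_zero])
    exact (Matrix.isUnit_iff_isUnit_det S).mpr hne.isUnit
  -- key estimate for arbitrary B in the set
  have key : ∀ B : Matrix (Fin n) (Fin n) ℂ, B.PosDef →
      (n : ℝ) * ((A.det * B.det).re) ^ ((n : ℝ)⁻¹) ≤ ((A * B).trace).re ∧
      ((A * B).trace).im = 0 ∧ 0 < ((A * B).trace).re := by
    intro B hB
    have hM : (S * B * S).PosDef := posdef_conj hSherm hSu hB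
    have htreq : (A * B).trace = (S * B * S).trace := by
      rw [← hSS, mul_assoc, Matrix.trace_mul_comm, mul_assoc]
    have hdeteq : (S * B * S).det = A.det * B.det := by
      rw [Matrix.det_mul, Matrix.det_mul, ← hSdet]; ring
    have h := posdef_amgm hn hM
    rw [← htreq, hdeteq] at h
    exact h
  -- the minimizer
  set B₀ : Matrix (Fin n) (Fin n) ℂ := (c : ℂ) • A⁻¹ with hB₀_def
  have hAinv : A⁻¹.PosDef := hA.inv
  have hB₀ : B₀.PosDef := by
    refine Matrix.PosDef.of_dotProduct_mulVec_pos ?_ ?_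
    · unfold Matrix.IsHermitian
      rw [hB₀_def, Matrix.conjTranspose_smul, hAinv.1.eq]
      congr 1
      simp [Complex.ext_iff]
    · intro x hx
      rw [hB₀_def, Matrix.smul_mulVec, dotProduct_smul, smul_eq_mul]
      have h1 : (0 : ℂ) < (c : ℂ) := by
        rw [Complex.lt_def]; simp [hc]
      exact mul_pos h1 (hAinv.dotProduct_mulVec_pos hx)
  have hB₀det : B₀.det = 1 := by
    rw [hB₀_def, Matrix.det_smul, Matrix.det_nonsing_inv, Fintype.card_fin]
    rw [hdetA_eq]
    have hcn : (c : ℂ) ^ n = (A.det.re : ℂ) := by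
      rw [← Complex.ofReal_pow, hc_def, Real.rpow_inv_natCast_pow hdetA_re.le hn.ne']
    rw [hcn, Ring.inverse_eq_inv]
    field_simp
  have hB₀tr : ((A * B₀).trace) = ((n : ℝ) * c : ℝ) := by
    rw [hB₀_def, Matrix.mul_smul, Matrix.mul_nonsing_inv _ hdetA.ne'.isUnit]
    rw [Matrix.trace_smul, Matrix.trace_one, Fintype.card_fin, smul_eq_mul]
    push_cast
    ring
  have hmem : (n : ℝ) * c ∈ {x : ℝ | ∃ B : Matrix (Fin n) (Fin n) ℂ,
      B.PosDef ∧ B.det = 1 ∧ x = ((A * B).trace).re} := by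
    refine ⟨B₀, hB₀, hB₀det, ?_⟩
    rw [hB₀tr]
    simp
  have hlb : ∀ x ∈ {x : ℝ | ∃ B : Matrix (Fin n) (Fin n) ℂ,
      B.PosDef ∧ B.det = 1 ∧ x = ((A * B).trace).re}, (n : ℝ) * c ≤ x := by
    rintro x ⟨B, hB, hBdet, rfl⟩
    have h := (key B hB).1
    rw [hBdet, mul_one, hdetA_eq, Complex.ofReal_re] at h
    exact h
  have hsinf : sInf {x : ℝ | ∃ B : Matrix (Fin n) (Fin n) ℂ,
      B.PosDef ∧ B.det = 1 ∧ x = ((A * B).trace).re} = (n : ℝ) * c := by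
    apply le_antisymm
    · exact csInf_le ⟨(n : ℝ) * c, hlb⟩ hmem
    · exact le_csInf ⟨_, hmem⟩ hlb
  constructor
  · rw [hsinf, one_div, ← mul_assoc,
      inv_mul_cancel₀ (by exact_mod_cast hn.ne' : (n : ℝ) ≠ 0), one_mul]
  · intro B hB hBdet
    exact (key B hB).2
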